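/- Let s ≥ 3 be an integer and set r = 2s. Let U_0 = {1, 2, …, s}. Then the product over all unordered pairs {a, b} of distinct elements of U_0 of 16·sin²(π(a−b)/r)·sin²(π(a+b)/r) equals r^{s−1}. -/

import Mathlib

open Real Finset

noncomputable def gfun (s c : ℕ) : ℝ := 4 * Real.sin (Real.pi * c / (2 * s)) ^ 2

lemma gfun_nonneg (s c : ℕ) : 0 ≤ gfun s c := by
  unfold gfun; positivity

lemma gfun_pos (s : ℕ) {c : ℕ} (h0 : 0 < c) (h1 : c < 2 * s) : 0 < gfun s c := by
  have hs : 0 < s := by omega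
  have harg : 0 < Real.pi * c / (2 * s) := by
    apply div_pos (by positivity) (by positivity)
  have harg2 : Real.pi * c / (2 * s) < Real.pi := by
    rw [div_lt_iff₀ (by positivity)]
    have : (c : ℝ) < 2 * s := by exact_mod_cast h1
    nlinarith [Real.pi_pos]
  have := Real.sin_pos_of_pos_of_lt_pi harg harg2
  unfold gfun; positivity

lemma gfun_symm (s : ℕ) {c : ℕ} (hc : c ≤ 2 * s) : gfun s (2 * s - c) = gfun s c := by
  unfold gfun
  have hs : (0:ℕ) ≤ s := by omega
  congr 1
  have hcast : ((2 * s - c : ℕ) : ℝ) = 2 * (s:ℝ) - c := by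
    push_cast [Nat.cast_sub hc]; ring
  rcases Nat.eq_zero_or_pos s with rfl | hs'
  · interval_cases c <;> simp
  have hsne : (2 * (s:ℝ)) ≠ 0 := by positivity
  have : Real.pi * ((2 * s - c : ℕ) : ℝ) / (2 * s) = Real.pi - Real.pi * c / (2 * s) := by
    rw [hcast]; field_simp
  rw [this, Real.sin_pi_sub]

lemma sin_sq_prod (n : ℕ) (hn : 0 < n) :
    ∏ k ∈ Finset.Ico 1 n, (4 * Real.sin (Real.pi * k / n) ^ 2) = (n : ℝ) ^ 2 := by
  have hζ : IsPrimitiveRoot (Complex.exp (2 * Real.pi * Complex.I / n)) n :=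
    Complex.isPrimitiveRoot_exp n hn.ne'
  set ζ : ℂ := Complex.exp (2 * Real.pi * Complex.I / n) with hζdef
  -- key : ∏ k in Ico 1 n, (1 - ζ^k) = n
  have key : ∏ k ∈ Finset.Ico 1 n, (1 - ζ ^ k) = (n : ℂ) := by
    obtain ⟨m, rfl⟩ := Nat.exists_eq_succ_of_ne_zero hn.ne'
    rw [Finset.prod_Ico_eq_prod_range]
    simpa [Nat.succ_sub_one, add_comm 1] using hζ.prod_one_sub_pow_eq_order
  -- pointwise: (1-ζ^k)(1-ζ^(n-k)) = 4 sin(πk/n)^2 as complex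
  have point : ∀ k ∈ Finset.Ico 1 n, ((4 * Real.sin (Real.pi * k / n) ^ 2 : ℝ) : ℂ)
      = (1 - ζ ^ k) * (1 - ζ ^ (n - k)) := by
    intro k hk
    simp only [Finset.mem_Ico] at hk
    have hinv : ζ ^ (n - k) = (ζ ^ k)⁻¹ := by
      have h1 : ζ ^ n = 1 := hζ.pow_eq_one
      have hm : ζ ^ (n - k) * ζ ^ k = 1 := by
        rw [← pow_add, Nat.sub_add_cancel hk.2.le, h1]
      exact eq_inv_of_mul_eq_one_left hm
    have hk' : ζ ^ k = Complex.exp (2 * Real.pi * (k / n) * Complex.I) := by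
      rw [hζdef, ← Complex.exp_nat_mul]
      ring_nf
    have hn' : (n : ℂ) ≠ 0 := Nat.cast_ne_zero.2 hn.ne'
    rw [hinv, hk', ← Complex.exp_neg]
    have c2 : Complex.exp (2 * Real.pi * (k / n) * Complex.I)
        + Complex.exp (-(2 * Real.pi * (k / n) * Complex.I))
        = 2 * Complex.cos (2 * Real.pi * (k / n)) := by
      rw [Complex.cos]
      ring_nf
    have hexp : Complex.exp (2 * Real.pi * (k / n) * Complex.I)
        * Complex.exp (-(2 * Real.pi * (k / n) * Complex.I)) = 1 := by
      rw [← Complex.exp_add]; simp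
    have expand : (1 - Complex.exp (2 * Real.pi * (k / n) * Complex.I))
        * (1 - Complex.exp (-(2 * Real.pi * (k / n) * Complex.I)))
        = 2 - 2 * Complex.cos (2 * Real.pi * (k / n)) := by
      have := c2
      ring_nf
      ring_nf at this hexp
      linear_combination hexp - this
    rw [expand]
    have hcos : Complex.cos (2 * Real.pi * ((k : ℂ) / n))
        = 1 - 2 * Complex.sin (Real.pi * ((k : ℂ) / n)) ^ 2 := by
      have h2 := Complex.cos_two_mul' (Real.pi * ((k : ℂ) / n))
      rw [show (2 : ℂ) * Real.pi * ((k : ℂ) / n) = 2 * (Real.pi * ((k : ℂ)/n)) by ring, h2]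
      linear_combination Complex.sin_sq_add_cos_sq (Real.pi * ((k : ℂ) / n))
    rw [hcos]
    have harg : ((Real.pi * k / n : ℝ) : ℂ) = Real.pi * ((k : ℂ) / n) := by
      push_cast; ring
    rw [show ((4 * Real.sin (Real.pi * k / n) ^ 2 : ℝ) : ℂ)
        = 4 * ((Real.sin (Real.pi * k / n) : ℝ) : ℂ) ^ 2 by push_cast; ring,
      Complex.ofReal_sin, harg]
    ring
  have main : ((∏ k ∈ Finset.Ico 1 n, (4 * Real.sin (Real.pi * k / n) ^ 2) : ℝ) : ℂ)
      = (((n : ℝ) ^ 2 : ℝ) : ℂ) := by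
    rw [Complex.ofReal_prod, Finset.prod_congr rfl point, Finset.prod_mul_distrib, key]
    have hre : ∏ k ∈ Finset.Ico 1 n, (1 - ζ ^ (n - k)) = ∏ k ∈ Finset.Ico 1 n, (1 - ζ ^ k) := by
      apply Finset.prod_nbij' (fun k => n - k) (fun k => n - k)
      · intro a ha; simp only [Finset.mem_Ico] at ha ⊢; omega
      · intro a ha; simp only [Finset.mem_Ico] at ha ⊢; omega
      · intro a ha; simp only [Finset.mem_Ico] at ha; omega
      · intro a ha; simp only [Finset.mem_Ico] at ha; omega
      · intro a ha; rfl
    rw [hre, key]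
    push_cast; ring
  exact_mod_cast main

lemma gG (s : ℕ) (hs : 0 < s) : ∏ c ∈ Finset.Ioc 0 (2 * s - 1), gfun s c = (2 * (s:ℝ)) ^ 2 := by
  have hset : Finset.Ioc 0 (2 * s - 1) = Finset.Ico 1 (2 * s) := by ext x; simp; omega
  rw [hset]
  have := sin_sq_prod (2 * s) (by omega)
  rw [show ((2 * s : ℕ) : ℝ) = 2 * (s : ℝ) by push_cast; ring] at this
  exact this

lemma gE (s : ℕ) (hs : 0 < s) : ∏ k ∈ Finset.Ioc 0 (s - 1), gfun s (2 * k) = (s:ℝ) ^ 2 := by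
  have hset : Finset.Ioc 0 (s - 1) = Finset.Ico 1 s := by ext x; simp; omega
  rw [hset]
  have h := sin_sq_prod s hs
  rw [← h]
  apply Finset.prod_congr rfl
  intro k hk
  unfold gfun
  have hsne : (s:ℝ) ≠ 0 := Nat.cast_ne_zero.2 hs.ne'
  have harg : Real.pi * ((2 * k : ℕ) : ℝ) / (2 * (s:ℝ)) = Real.pi * (k:ℝ) / (s:ℝ) := by
    push_cast; field_simp
  rw [harg]

lemma godd (s : ℕ) (hs : 0 < s) : ∏ b ∈ Finset.Ioc 0 s, gfun s (2 * b - 1) = 4 := by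
  -- partition Ioc 0 (2s-1) into odds and evens
  have hsplit : ∏ c ∈ Finset.Ioc 0 (2 * s - 1), gfun s c
      = (∏ c ∈ (Finset.Ioc 0 (2 * s - 1)).filter (fun c => c % 2 = 1), gfun s c)
        * (∏ c ∈ (Finset.Ioc 0 (2 * s - 1)).filter (fun c => ¬ c % 2 = 1), gfun s c) :=
    (Finset.prod_filter_mul_prod_filter_not _ _ _).symm
  have hodd : ∏ c ∈ (Finset.Ioc 0 (2 * s - 1)).filter (fun c => c % 2 = 1), gfun s c
      = ∏ b ∈ Finset.Ioc 0 s, gfun s (2 * b - 1) := by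
    apply Finset.prod_nbij' (fun c => (c + 1) / 2) (fun b => 2 * b - 1)
    · intro a ha; simp only [Finset.mem_filter, Finset.mem_Ioc] at ha ⊢; omega
    · intro a ha; simp only [Finset.mem_filter, Finset.mem_Ioc] at ha ⊢; omega
    · intro a ha; simp only [Finset.mem_filter, Finset.mem_Ioc] at ha; omega
    · intro a ha; simp only [Finset.mem_filter, Finset.mem_Ioc] at ha; omega
    · intro a ha; simp only [Finset.mem_filter, Finset.mem_Ioc] at ha
      congr 1; omega
  have heven : ∏ c ∈ (Finset.Ioc 0 (2 * s - 1)).filter (fun c => ¬ c % 2 = 1), gfun s c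
      = ∏ k ∈ Finset.Ioc 0 (s - 1), gfun s (2 * k) := by
    apply Finset.prod_nbij' (fun c => c / 2) (fun k => 2 * k)
    · intro a ha; simp only [Finset.mem_filter, Finset.mem_Ioc] at ha ⊢; omega
    · intro a ha; simp only [Finset.mem_filter, Finset.mem_Ioc] at ha ⊢; omega
    · intro a ha; simp only [Finset.mem_filter, Finset.mem_Ioc] at ha; omega
    · intro a ha; simp only [Finset.mem_filter, Finset.mem_Ioc] at ha; omega
    · intro a ha; simp only [Finset.mem_filter, Finset.mem_Ioc] at ha
      congr 1; omega
  have h1 := gG s hs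
  rw [hsplit, hodd, heven, gE s hs] at h1
  have hsne : (s:ℝ) ^ 2 ≠ 0 := by
    have : (s:ℝ) ≠ 0 := Nat.cast_ne_zero.2 hs.ne'
    positivity
  exact mul_right_cancel₀ hsne (h1.trans (by ring))

lemma gss (s : ℕ) (hs : 0 < s) : gfun s s = 4 := by
  unfold gfun
  have hsne : (s:ℝ) ≠ 0 := Nat.cast_ne_zero.2 hs.ne'
  rw [show Real.pi * (s:ℝ) / (2 * s) = Real.pi / 2 by field_simp, Real.sin_pi_div_two]
  norm_num

lemma gM (s : ℕ) (hs : 0 < s) : ∏ c ∈ Finset.Ioc 0 (s - 1), gfun s c = (s:ℝ) := by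
  have h1 : (∏ c ∈ Finset.Ioc 0 (s - 1), gfun s c) * ∏ c ∈ Finset.Ioc (s - 1) (2 * s - 1), gfun s c
      = ∏ c ∈ Finset.Ioc 0 (2 * s - 1), gfun s c :=
    Finset.prod_Ioc_consecutive _ (by omega) (by omega)
  have h2 : (∏ c ∈ Finset.Ioc (s - 1) s, gfun s c) * ∏ c ∈ Finset.Ioc s (2 * s - 1), gfun s c
      = ∏ c ∈ Finset.Ioc (s - 1) (2 * s - 1), gfun s c :=
    Finset.prod_Ioc_consecutive _ (by omega) (by omega)
  have h3 : Finset.Ioc (s - 1) s = {s} := by ext x; simp; omega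
  have h4 : ∏ c ∈ Finset.Ioc s (2 * s - 1), gfun s c = ∏ c ∈ Finset.Ioc 0 (s - 1), gfun s c := by
    apply Finset.prod_nbij' (fun c => 2 * s - c) (fun c => 2 * s - c)
    · intro a ha; simp only [Finset.mem_Ioc] at ha ⊢; omega
    · intro a ha; simp only [Finset.mem_Ioc] at ha ⊢; omega
    · intro a ha; simp only [Finset.mem_Ioc] at ha; omega
    · intro a ha; simp only [Finset.mem_Ioc] at ha; omega
    · intro a ha; simp only [Finset.mem_Ioc] at ha
      exact (gfun_symm s (by omega)).symm
  rw [h3, Finset.prod_singleton, gss s hs, h4] at h2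
  rw [← h2, gG s hs] at h1
  set M := ∏ c ∈ Finset.Ioc 0 (s - 1), gfun s c with hM
  have hMnn : 0 ≤ M := Finset.prod_nonneg fun c _ => gfun_nonneg s c
  have hsq : M ^ 2 = (s:ℝ) ^ 2 := by nlinarith [h1]
  have hsnn : (0:ℝ) ≤ s := Nat.cast_nonneg s
  nlinarith [hsq, hMnn, hsnn]

lemma gQ (s : ℕ) (hs : 0 < s) : ∏ b ∈ Finset.Ioc 0 s, gfun s b = 4 * (s:ℝ) := by
  have h1 : (∏ c ∈ Finset.Ioc 0 (s - 1), gfun s c) * ∏ c ∈ Finset.Ioc (s - 1) s, gfun s c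
      = ∏ c ∈ Finset.Ioc 0 s, gfun s c :=
    Finset.prod_Ioc_consecutive _ (by omega) (by omega)
  have h3 : Finset.Ioc (s - 1) s = {s} := by ext x; simp; omega
  rw [h3, Finset.prod_singleton, gss s hs, gM s hs] at h1
  rw [← h1]; ring

/-- For `s ≥ 3`, `r = 2s`, the product over unordered pairs `{a,b}` of
distinct elements of `U_0 = {1,…,s}` of `16·sin²(π(a−b)/r)·sin²(π(a+b)/r)`
equals `r^(s−1)`. -/
theorem verlinde_Ds_U0 (s : ℕ) (hs : 3 ≤ s) :
    (∏ p ∈ (Finset.Icc 1 s).offDiag.filter (fun p => p.1 < p.2),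
        (16 * Real.sin (Real.pi * ((p.1 : ℝ) - (p.2 : ℝ)) / (2 * s)) ^ 2 *
          Real.sin (Real.pi * ((p.1 : ℝ) + (p.2 : ℝ)) / (2 * s)) ^ 2)) =
      (2 * (s : ℝ)) ^ (s - 1) := by

  have hs0 : 0 < s := by omega
  -- Step 1 : rewrite as a double product of gfun values
  have hset : (Finset.Icc 1 s).offDiag.filter (fun p => p.1 < p.2)
      = ((Finset.Ioc 0 s) ×ˢ (Finset.Ioc 0 s)).filter (fun p => p.1 < p.2) := by
    ext p
    simp only [Finset.mem_filter, Finset.mem_offDiag, Finset.mem_Icc, Finset.mem_Ioc,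
      Finset.mem_product]
    omega
  have step1 : (∏ p ∈ (Finset.Icc 1 s).offDiag.filter (fun p => p.1 < p.2),
        (16 * Real.sin (Real.pi * ((p.1 : ℝ) - (p.2 : ℝ)) / (2 * s)) ^ 2 *
          Real.sin (Real.pi * ((p.1 : ℝ) + (p.2 : ℝ)) / (2 * s)) ^ 2))
      = ∏ b ∈ Finset.Ioc 0 s, ∏ a ∈ Finset.Ioc 0 (b - 1),
          (gfun s (b - a) * gfun s (a + b)) := by
    rw [hset, Finset.prod_filter, Finset.prod_product_right]
    apply Finset.prod_congr rfl
    intro b hb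
    simp only [Finset.mem_Ioc] at hb
    rw [← Finset.prod_filter]
    have hfil : (Finset.Ioc 0 s).filter (fun a => a < b) = Finset.Ioc 0 (b - 1) := by
      ext x; simp only [Finset.mem_filter, Finset.mem_Ioc]; omega
    rw [hfil]
    apply Finset.prod_congr rfl
    intro a ha
    simp only [Finset.mem_Ioc] at ha
    have hab : a < b := by omega
    have c1 : ((a:ℝ) - (b:ℝ)) = -(((b - a : ℕ)):ℝ) := by
      push_cast [Nat.cast_sub hab.le]; ring
    have c2 : ((a:ℝ) + (b:ℝ)) = ((a + b : ℕ):ℝ) := by push_cast; ring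
    unfold gfun
    rw [c1, c2]
    have c3 : Real.pi * (-(((b - a : ℕ)):ℝ)) / (2 * s)
        = -(Real.pi * ((b - a : ℕ):ℝ) / (2 * s)) := by ring
    rw [c3, Real.sin_neg]
    ring
  -- Step 2 : telescoping each inner product
  have step2 : ∀ b ∈ Finset.Ioc 0 s,
      (∏ a ∈ Finset.Ioc 0 (b - 1), (gfun s (b - a) * gfun s (a + b))) * gfun s b
        = ∏ c ∈ Finset.Ioc 0 (2 * b - 1), gfun s c := by
    intro b hb
    simp only [Finset.mem_Ioc] at hb
    rw [Finset.prod_mul_distrib]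
    have e1 : ∏ a ∈ Finset.Ioc 0 (b - 1), gfun s (b - a)
        = ∏ c ∈ Finset.Ioc 0 (b - 1), gfun s c := by
      apply Finset.prod_nbij' (fun a => b - a) (fun c => b - c)
      · intro a ha; simp only [Finset.mem_Ioc] at ha ⊢; omega
      · intro a ha; simp only [Finset.mem_Ioc] at ha ⊢; omega
      · intro a ha; simp only [Finset.mem_Ioc] at ha; omega
      · intro a ha; simp only [Finset.mem_Ioc] at ha; omega
      · intro a ha; rfl
    have e2 : ∏ a ∈ Finset.Ioc 0 (b - 1), gfun s (a + b)
        = ∏ c ∈ Finset.Ioc b (2 * b - 1), gfun s c := by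
      apply Finset.prod_nbij' (fun a => a + b) (fun c => c - b)
      · intro a ha; simp only [Finset.mem_Ioc] at ha ⊢; omega
      · intro a ha; simp only [Finset.mem_Ioc] at ha ⊢; omega
      · intro a ha; simp only [Finset.mem_Ioc] at ha; omega
      · intro a ha; simp only [Finset.mem_Ioc] at ha; omega
      · intro a ha; rfl
    rw [e1, e2]
    have h3 : Finset.Ioc (b - 1) b = {b} := by ext x; simp; omega
    have h4 : (∏ c ∈ Finset.Ioc (b-1) b, gfun s c) * ∏ c ∈ Finset.Ioc b (2*b-1), gfun s c
        = ∏ c ∈ Finset.Ioc (b-1) (2*b-1), gfun s c :=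
      Finset.prod_Ioc_consecutive _ (by omega) (by omega)
    have h5 : (∏ c ∈ Finset.Ioc 0 (b-1), gfun s c) * ∏ c ∈ Finset.Ioc (b-1) (2*b-1), gfun s c
        = ∏ c ∈ Finset.Ioc 0 (2*b-1), gfun s c :=
      Finset.prod_Ioc_consecutive _ (by omega) (by omega)
    rw [h3, Finset.prod_singleton] at h4
    rw [← h5, ← h4]
    ring
  -- pairing lemma
  have hpair : ∀ b ∈ Finset.Ioc 0 s,
      (∏ c ∈ Finset.Ioc 0 (2 * b - 1), gfun s c)
        * (∏ c ∈ Finset.Ioc 0 (2 * (s + 1 - b) - 1), gfun s c)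
      = (2 * (s:ℝ)) ^ 2 * gfun s (2 * b - 1) := by
    intro b hb
    simp only [Finset.mem_Ioc] at hb
    have e1 : ∏ c ∈ Finset.Ioc 0 (2 * (s + 1 - b) - 1), gfun s c
        = ∏ c ∈ Finset.Ioc (2 * b - 2) (2 * s - 1), gfun s c := by
      apply Finset.prod_nbij' (fun c => 2 * s - c) (fun c => 2 * s - c)
      · intro a ha; simp only [Finset.mem_Ioc] at ha ⊢; omega
      · intro a ha; simp only [Finset.mem_Ioc] at ha ⊢; omega
      · intro a ha; simp only [Finset.mem_Ioc] at ha; omega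
      · intro a ha; simp only [Finset.mem_Ioc] at ha; omega
      · intro a ha; simp only [Finset.mem_Ioc] at ha
        exact (gfun_symm s (by omega)).symm
    have h3 : Finset.Ioc (2*b-2) (2*b-1) = {2*b-1} := by ext x; simp; omega
    have h4 : (∏ c ∈ Finset.Ioc (2*b-2) (2*b-1), gfun s c)
        * ∏ c ∈ Finset.Ioc (2*b-1) (2*s-1), gfun s c
        = ∏ c ∈ Finset.Ioc (2*b-2) (2*s-1), gfun s c :=
      Finset.prod_Ioc_consecutive _ (by omega) (by omega)
    have h5 : (∏ c ∈ Finset.Ioc 0 (2*b-1), gfun s c)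
        * ∏ c ∈ Finset.Ioc (2*b-1) (2*s-1), gfun s c
        = ∏ c ∈ Finset.Ioc 0 (2*s-1), gfun s c :=
      Finset.prod_Ioc_consecutive _ (by omega) (by omega)
    rw [h3, Finset.prod_singleton] at h4
    rw [e1, ← h4]
    calc (∏ c ∈ Finset.Ioc 0 (2*b-1), gfun s c)
        * (gfun s (2*b-1) * ∏ c ∈ Finset.Ioc (2*b-1) (2*s-1), gfun s c)
        = ((∏ c ∈ Finset.Ioc 0 (2*b-1), gfun s c)
            * ∏ c ∈ Finset.Ioc (2*b-1) (2*s-1), gfun s c) * gfun s (2*b-1) := by ring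
      _ = (2 * (s:ℝ)) ^ 2 * gfun s (2*b-1) := by rw [h5, gG s hs0]
  -- assemble
  set P := (∏ p ∈ (Finset.Icc 1 s).offDiag.filter (fun p => p.1 < p.2),
        (16 * Real.sin (Real.pi * ((p.1 : ℝ) - (p.2 : ℝ)) / (2 * s)) ^ 2 *
          Real.sin (Real.pi * ((p.1 : ℝ) + (p.2 : ℝ)) / (2 * s)) ^ 2)) with hP
  set K := ∏ b ∈ Finset.Ioc 0 s, ∏ c ∈ Finset.Ioc 0 (2 * b - 1), gfun s c with hK
  have hPK : P * (4 * (s:ℝ)) = K := by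
    rw [step1, hK, ← gQ s hs0, ← Finset.prod_mul_distrib]
    exact Finset.prod_congr rfl step2
  have hKrev : ∏ b ∈ Finset.Ioc 0 s, ∏ c ∈ Finset.Ioc 0 (2 * (s + 1 - b) - 1), gfun s c
      = ∏ b ∈ Finset.Ioc 0 s, ∏ c ∈ Finset.Ioc 0 (2 * b - 1), gfun s c := by
    apply Finset.prod_nbij' (fun b => s + 1 - b) (fun b => s + 1 - b)
    · intro a ha; simp only [Finset.mem_Ioc] at ha ⊢; omega
    · intro a ha; simp only [Finset.mem_Ioc] at ha ⊢; omega
    · intro a ha; simp only [Finset.mem_Ioc] at ha; omega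
    · intro a ha; simp only [Finset.mem_Ioc] at ha; omega
    · intro a ha; rfl
  have hK2 : K ^ 2 = ((2 * (s:ℝ)) ^ 2) ^ s * 4 := by
    calc K ^ 2 = (∏ b ∈ Finset.Ioc 0 s, ∏ c ∈ Finset.Ioc 0 (2 * b - 1), gfun s c)
          * ∏ b ∈ Finset.Ioc 0 s, ∏ c ∈ Finset.Ioc 0 (2 * (s + 1 - b) - 1), gfun s c := by
          rw [hKrev, ← hK, sq]
      _ = ∏ b ∈ Finset.Ioc 0 s, ((∏ c ∈ Finset.Ioc 0 (2 * b - 1), gfun s c)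
            * ∏ c ∈ Finset.Ioc 0 (2 * (s + 1 - b) - 1), gfun s c) :=
          (Finset.prod_mul_distrib).symm
      _ = ∏ b ∈ Finset.Ioc 0 s, ((2 * (s:ℝ)) ^ 2 * gfun s (2 * b - 1)) :=
          Finset.prod_congr rfl hpair
      _ = ((2 * (s:ℝ)) ^ 2) ^ s * 4 := by
          rw [Finset.prod_mul_distrib, Finset.prod_const, godd s hs0, Nat.card_Ioc]
          norm_num
  -- positivity of P
  have hPpos : 0 < P := by
    rw [step1]
    apply Finset.prod_pos
    intro b hb
    simp only [Finset.mem_Ioc] at hb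
    apply Finset.prod_pos
    intro a ha
    simp only [Finset.mem_Ioc] at ha
    exact mul_pos (gfun_pos s (by omega) (by omega)) (gfun_pos s (by omega) (by omega))
  set R : ℝ := (2 * (s:ℝ)) ^ (s - 1) with hR
  have hRpos : 0 < R := by
    rw [hR]; positivity
  have hspos : (0:ℝ) < s := by exact_mod_cast hs0
  have hPR : P ^ 2 = R ^ 2 := by
    have h1 : (P * (4 * (s:ℝ))) ^ 2 = K ^ 2 := by rw [hPK]
    rw [hK2] at h1
    have h2 : ((2 * (s:ℝ)) ^ 2) ^ s = ((2 * (s:ℝ)) ^ (s - 1)) ^ 2 * (2 * (s:ℝ)) ^ 2 := by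
      rw [← pow_mul, ← pow_mul, ← pow_add]
      congr 1
      omega
    rw [h2] at h1
    have h3 : (16 * (s:ℝ)^2) ≠ 0 := by positivity
    apply mul_right_cancel₀ h3
    rw [hR]
    linear_combination h1
  have hfac : (P - R) * (P + R) = 0 := by nlinarith [hPR]
  rcases mul_eq_zero.mp hfac with h | h
  · linarith
  · linarith
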